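/- Let η be a configuration of r particles, i.e. η = δ_{x_1}+...+δ_{x_r} with x_i in a measurable space E. For any n ≤ r and any permutation-invariant bounded f_n : E^n → ℝ, one has J_n(f_n, η) = (n!/(r-n)!) · 𝒜_{n,r} f_n(x_1,...,x_r), where 𝒜_{n,r} = 𝒜_{n,n+1} ∘ ... ∘ 𝒜_{r-1,r} is the composition of lowering operators 𝒜_{k-1,k} g(y_1,...,y_k) = Σ_{j=1}^k g(y_1,...,ŷ_j,...,y_k) (with y_j omitted). -/

import Mathlib

open Finset Function


lemma key (n d : ℕ) (g : (Fin n → Fin (n + d + 1)) → ℝ) :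
    ∑ j : Fin (n + d + 1), ∑ i ∈ univ.filter (fun i : Fin n → Fin (n + d) => Injective i),
        g (j.succAbove ∘ i)
    = ((d : ℝ) + 1) * ∑ i ∈ univ.filter (fun i : Fin n → Fin (n + d + 1) => Injective i), g i := by
  have step1 : ∀ j : Fin (n + d + 1),
      ∑ i ∈ univ.filter (fun i : Fin n → Fin (n + d) => Injective i), g (j.succAbove ∘ i)
      = ∑ i ∈ univ.filter (fun i : Fin n → Fin (n + d + 1) => Injective i ∧ ∀ k, i k ≠ j), g i := by
    intro j
    apply Finset.sum_bij (fun i _ => j.succAbove ∘ i)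
    · intro i hi
      simp only [mem_filter, mem_univ, true_and] at hi ⊢
      exact ⟨(Fin.succAbove_right_injective).comp hi, fun k => Fin.succAbove_ne j (i k)⟩
    · intro a ha b hb hab
      funext k
      exact Fin.succAbove_right_injective (congrFun hab k)
    · intro i hi
      simp only [mem_filter, mem_univ, true_and] at hi
      refine ⟨fun k => (finSuccAboveEquiv j).symm ⟨i k, hi.2 k⟩, ?_, ?_⟩
      · simp only [mem_filter, mem_univ, true_and]
        intro a b hab
        exact hi.1 (by simpa using congrArg (fun z => ((finSuccAboveEquiv j) z : Fin (n+d+1))) hab)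
      · funext k
        have h2 : (finSuccAboveEquiv j) ((finSuccAboveEquiv j).symm ⟨i k, hi.2 k⟩)
            = ⟨i k, hi.2 k⟩ := Equiv.apply_symm_apply _ _
        rw [finSuccAboveEquiv_apply] at h2
        exact congrArg Subtype.val h2
    · intro i hi; rfl
  rw [Finset.sum_congr rfl (fun j _ => step1 j)]
  -- swap sums
  classical
  have swap : ∑ j : Fin (n + d + 1),
      ∑ i ∈ univ.filter (fun i : Fin n → Fin (n + d + 1) => Injective i ∧ ∀ k, i k ≠ j), g i
      = ∑ i ∈ univ.filter (fun i : Fin n → Fin (n + d + 1) => Injective i),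
          ∑ j ∈ univ.filter (fun j => ∀ k, i k ≠ j), g i := by
    simp_rw [Finset.sum_filter, ite_and]
    rw [Finset.sum_comm]
    apply Finset.sum_congr rfl
    intro y _
    split_ifs with h
    · rfl
    · simp
  rw [swap]
  have card_eq : ∀ i : Fin n → Fin (n + d + 1), Injective i →
      (univ.filter (fun j => ∀ k, i k ≠ j)).card = d + 1 := by
    intro i hi
    have : univ.filter (fun j => ∀ k, i k ≠ j) = univ \ univ.image i := by
      ext j
      simp [eq_comm]
    rw [this, Finset.card_sdiff_of_subset (Finset.subset_univ _),
      Finset.card_image_of_injective _ hi]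
    simp [Nat.add_sub_cancel_left, Nat.add_comm]
    omega
  rw [Finset.mul_sum]
  apply Finset.sum_congr rfl
  intro i hi
  simp only [mem_filter, mem_univ, true_and] at hi
  rw [Finset.sum_const, card_eq i hi, nsmul_eq_mul]
  push_cast; ring

theorem base {E : Type*} (n : ℕ) (f : (Fin n → E) → ℝ)
    (hperm : ∀ (σ : Equiv.Perm (Fin n)) (y : Fin n → E), f (y ∘ σ) = f y)
    (x : Fin n → E) :
    ∑ i ∈ univ.filter (fun i : Fin n → Fin n => Injective i), f (x ∘ i)
      = (n.factorial : ℝ) * f x := by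
  have hterm : ∀ i ∈ univ.filter (fun i : Fin n → Fin n => Injective i), f (x ∘ i) = f x := by
    intro i hi
    simp only [mem_filter, mem_univ, true_and] at hi
    have hb : Bijective i := Finite.injective_iff_bijective.mp hi
    exact hperm (Equiv.ofBijective i hb) x
  rw [Finset.sum_congr rfl hterm, Finset.sum_const, nsmul_eq_mul]
  congr 2
  have : (univ.filter (fun i : Fin n → Fin n => Injective i)).card
      = Fintype.card {i : Fin n → Fin n // Injective i} := (Fintype.card_subtype _).symm
  rw [this]
  rw [Fintype.card_congr (Equiv.subtypeInjectiveEquivEmbedding (Fin n) (Fin n))]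
  rw [Fintype.card_embedding_eq]
  simp [Nat.descFactorial_self]

/-- Iterated lowering operators `𝒜_{n,n+d} = 𝒜_{n,n+1} ∘ ⋯ ∘ 𝒜_{n+d-1,n+d}` acting on
functions of tuples: `𝒜_{k-1,k} g (y₁,…,y_k) = ∑_j g(y₁,…,ŷ_j,…,y_k)`. -/
def AIter {E : Type*} (n : ℕ) : (d : ℕ) → ((Fin n → E) → ℝ) → (Fin (n + d) → E) → ℝ
  | 0, f => f
  | d + 1, f => fun y => ∑ j : Fin (n + d + 1), AIter n d f (y ∘ j.succAbove)

/-- for `η = δ_{x 0} + ⋯ + δ_{x (r-1)}` with `r = n + d` and permutation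
invariant `f : E^n → ℝ`, the generalized falling factorial polynomial
`J_n(f,η) = ∫ f dη^{(n)}` (the sum of `f(x ∘ i)` over injective tuples `i`) equals
`(n! / (r-n)!) · 𝒜_{n,r} f (x₁,…,x_r)`. -/
theorem stmt10 {E : Type*} [DecidableEq E] (n d : ℕ) (f : (Fin n → E) → ℝ)
    (hperm : ∀ (σ : Equiv.Perm (Fin n)) (y : Fin n → E), f (y ∘ σ) = f y)
    (x : Fin (n + d) → E) :
    ∑ i ∈ Finset.univ.filter (fun i : Fin n → Fin (n + d) => Function.Injective i),
        f (x ∘ i)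
      = ((n.factorial : ℝ) / (d.factorial : ℝ)) * AIter n d f x := by
  induction d with
  | zero =>
    simp only [AIter, Nat.factorial_zero, Nat.cast_one, div_one]
    exact base n f hperm x
  | succ d ih =>
    have hkey := key n d (fun i => f (x ∘ i))
    have hstep : ∀ j : Fin (n + d + 1),
        ∑ i ∈ univ.filter (fun i : Fin n → Fin (n + d) => Injective i),
          f (x ∘ (j.succAbove ∘ i))
        = ((n.factorial : ℝ) / (d.factorial : ℝ)) * AIter n d f (x ∘ j.succAbove) := by
      intro j
      have := ih (x ∘ j.succAbove)
      simpa [Function.comp_assoc] using this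
    have hA : AIter n (d + 1) f x
        = ∑ j : Fin (n + d + 1), AIter n d f (x ∘ j.succAbove) := rfl
    set S := ∑ i ∈ Finset.univ.filter
        (fun i : Fin n → Fin (n + d + 1) => Function.Injective i), f (x ∘ i) with hS
    have h1 : ((d : ℝ) + 1) * S
        = ((n.factorial : ℝ) / (d.factorial : ℝ)) * AIter n (d + 1) f x := by
      rw [← hkey, hA, Finset.mul_sum]
      exact Finset.sum_congr rfl fun j _ => hstep j
    have hd1 : ((d : ℝ) + 1) ≠ 0 := by positivity
    have hd : (d.factorial : ℝ) ≠ 0 := by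
      exact_mod_cast Nat.factorial_ne_zero d
    have h2 : S = ((n.factorial : ℝ) / (d.factorial : ℝ)) * AIter n (d + 1) f x
        / ((d : ℝ) + 1) := by
      rw [eq_div_iff hd1, mul_comm S]
      exact h1
    show S = _
    rw [h2, Nat.factorial_succ, Nat.cast_mul, Nat.cast_add, Nat.cast_one,
      div_mul_eq_div_div_swap]
    ring
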